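/- The minimum of the conditional entropy over max-lift-feasible decompositions is attained on extreme points: suppose P_Y is a probability mass function on the finite set Y and W : Y → (X → ℝ) satisfies W_y ∈ Δ_ε for every y and Σ_y P_Y(y) · W_y = P_X (componentwise). Then there exist a finite set V of extreme points of Δ_ε and weights q : V → ℝ with q ≥ 0, Σ_{v ∈ V} q(v) = 1, Σ_{v ∈ V} q(v) · v = P_X, and Σ_{v ∈ V} q(v) h(v) ≤ Σ_y P_Y(y) h(W_y), where h(W) = −Σ_x W_x log W_x (with 0·log 0 = 0). -/

import Mathlib

open Finset

section Polytope
variable {E : Type*} [NormedAddCommGroup E] [NormedSpace ℝ E] [FiniteDimensional ℝ E]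

variable {E : Type*} [NormedAddCommGroup E] [NormedSpace ℝ E] [FiniteDimensional ℝ E]

lemma polytope_closed {ι : Type*} [Fintype ι] (g : ι → E →ₗ[ℝ] ℝ) (b : ι → ℝ)
    (ℓ : E →ₗ[ℝ] ℝ) (c : ℝ) :
    IsClosed {W : E | (∀ i, g i W ≤ b i) ∧ ℓ W = c} := by
  have h1 : {W : E | (∀ i, g i W ≤ b i) ∧ ℓ W = c}
      = (⋂ i, {W : E | g i W ≤ b i}) ∩ {W : E | ℓ W = c} := by
    ext v; simp [Set.mem_iInter]
  rw [h1]
  exact IsClosed.inter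
    (isClosed_iInter fun i => isClosed_le (g i).continuous_of_finiteDimensional
      continuous_const)
    (isClosed_eq ℓ.continuous_of_finiteDimensional continuous_const)

lemma polytope_convex {ι : Type*} (g : ι → E →ₗ[ℝ] ℝ) (b : ι → ℝ)
    (ℓ : E →ₗ[ℝ] ℝ) (c : ℝ) :
    Convex ℝ {W : E | (∀ i, g i W ≤ b i) ∧ ℓ W = c} := by
  intro x hx y hy a b' ha hb' hab
  refine ⟨fun i => ?_, ?_⟩
  · have := add_le_add (mul_le_mul_of_nonneg_left (hx.1 i) ha)
      (mul_le_mul_of_nonneg_left (hy.1 i) hb')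
    simp only [map_add, map_smul, smul_eq_mul]
    calc a * g i x + b' * g i y ≤ a * b i + b' * b i := this
      _ = b i := by rw [← add_mul, hab, one_mul]
  · simp only [map_add, map_smul, smul_eq_mul, hx.2, hy.2]
    rw [← add_mul, hab, one_mul]

lemma polytope_step {ι : Type*} [Fintype ι] (g : ι → E →ₗ[ℝ] ℝ) (b : ι → ℝ)
    (ℓ : E →ₗ[ℝ] ℝ) (c : ℝ)
    (Δ : Set E) (hΔ : Δ = {W : E | (∀ i, g i W ≤ b i) ∧ ℓ W = c})
    (hbdd : Bornology.IsBounded Δ)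
    (W : E) (hWmem : W ∈ Δ) (d : E) (hd : d ≠ 0)
    (ε : ℝ) (hε : 0 < ε) (hp : W + ε • d ∈ Δ) (hm : W - ε • d ∈ Δ) :
    ∃ t : ℝ, ε ≤ t ∧ W + t • d ∈ Δ ∧
      (∀ i, g i W = b i → g i (W + t • d) = b i) ∧
      (∃ i, g i (W + t • d) = b i ∧ g i W ≠ b i) := by
  have hWconstr : (∀ i, g i W ≤ b i) ∧ ℓ W = c := by rw [hΔ] at hWmem; exact hWmem
  have hpc : (∀ i, g i (W + ε • d) ≤ b i) ∧ ℓ (W + ε • d) = c := by rwa [hΔ] at hp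
  have hmc : (∀ i, g i (W - ε • d) ≤ b i) ∧ ℓ (W - ε • d) = c := by rwa [hΔ] at hm
  -- tight constraints have g i d = 0
  have hgd : ∀ i, g i W = b i → g i d = 0 := by
    intro i hi
    have h1 : g i W + ε * g i d ≤ b i := by
      have := hpc.1 i; simpa [map_add, map_smul, smul_eq_mul] using this
    have h2 : g i W - ε * g i d ≤ b i := by
      have := hmc.1 i; simpa [map_sub, map_smul, smul_eq_mul] using this
    rw [hi] at h1 h2
    have := le_antisymm (by linarith) (by linarith : (0:ℝ) ≤ ε * g i d)
    exact (mul_eq_zero.1 this).resolve_left (ne_of_gt hε)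
  have hld : ℓ d = 0 := by
    have h1 : ℓ W + ε * ℓ d = c := by
      have := hpc.2; simpa [map_add, map_smul, smul_eq_mul] using this
    rw [hWconstr.2] at h1
    have : ε * ℓ d = 0 := by linarith
    exact (mul_eq_zero.1 this).resolve_left (ne_of_gt hε)
  -- the feasibility interval
  set I : Set ℝ := {t : ℝ | W + t • d ∈ Δ} with hI
  have hIclosed : IsClosed I := by
    have : I = (fun t : ℝ => W + t • d) ⁻¹' Δ := rfl
    rw [this, hΔ]
    exact (polytope_closed g b ℓ c).preimage (by fun_prop)
  have hIne : (0:ℝ) ∈ I := by simpa [hI] using hWmem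
  obtain ⟨r, hr⟩ := hbdd.subset_closedBall 0
  have hdpos : 0 < ‖d‖ := norm_pos_iff.2 hd
  have hIbdd : BddAbove I := by
    refine ⟨(r + ‖W‖) / ‖d‖, fun t ht => ?_⟩
    have h1 : ‖W + t • d‖ ≤ r := by
      have := hr ht; simpa [Metric.mem_closedBall] using this
    have h2 : t * ‖d‖ ≤ r + ‖W‖ := by
      calc t * ‖d‖ ≤ |t| * ‖d‖ := by
            exact mul_le_mul_of_nonneg_right (le_abs_self t) (norm_nonneg d)
        _ = ‖t • d‖ := by rw [norm_smul, Real.norm_eq_abs]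
        _ = ‖(W + t • d) - W‖ := by rw [add_sub_cancel_left]
        _ ≤ ‖W + t • d‖ + ‖W‖ := norm_sub_le _ _
        _ ≤ r + ‖W‖ := by linarith
    exact (le_div_iff₀ hdpos).2 h2
  set t := sSup I with htdef
  have htI : t ∈ I := hIclosed.csSup_mem ⟨0, hIne⟩ hIbdd
  have hεI : ε ∈ I := by simpa [hI] using hp
  have hεt : ε ≤ t := le_csSup hIbdd hεI
  have hWt : W + t • d ∈ Δ := htI
  have hWtc : (∀ i, g i (W + t • d) ≤ b i) ∧ ℓ (W + t • d) = c := by rwa [hΔ] at hWt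
  have htight : ∀ i, g i W = b i → g i (W + t • d) = b i := by
    intro i hi
    simp [map_add, map_smul, smul_eq_mul, hgd i hi, hi]
  refine ⟨t, hεt, hWt, htight, ?_⟩
  by_contra hno
  push_neg at hno
  -- every constraint tight at W + t d is tight at W; find room to go further
  have hno' : ∀ i, g i (W + t • d) = b i → g i d = 0 := fun i hi => hgd i (hno i hi)
  set W₁ := W + t • d with hW₁
  set U : Set E := ⋂ i : {i : ι // g i W₁ < b i}, {v : E | g i.1 v < b i.1} with hU
  have hUopen : IsOpen U :=
    isOpen_iInter_of_finite fun i =>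
      isOpen_lt (g i.1).continuous_of_finiteDimensional continuous_const
  have hW₁U : W₁ ∈ U := by
    rw [hU]; exact Set.mem_iInter.2 fun i => i.2
  have hcont : Continuous (fun s : ℝ => W + s • d) := by fun_prop
  have hOopen : IsOpen ((fun s : ℝ => W + s • d) ⁻¹' U) := hUopen.preimage hcont
  have htO : t ∈ (fun s : ℝ => W + s • d) ⁻¹' U := hW₁U
  obtain ⟨ρ, hρpos, hball⟩ := Metric.isOpen_iff.1 hOopen t htO
  have ht' : t + ρ/2 ∈ (fun s : ℝ => W + s • d) ⁻¹' U := by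
    apply hball
    rw [Metric.mem_ball, Real.dist_eq, show t + ρ/2 - t = ρ/2 by ring,
      abs_of_pos (by linarith : (0:ℝ) < ρ/2)]
    linarith
  have hmemΔ : W + (t + ρ/2) • d ∈ Δ := by
    rw [hΔ]
    refine ⟨fun i => ?_, ?_⟩
    · by_cases hcase : g i W₁ < b i
      · have := Set.mem_iInter.1 ht' ⟨i, hcase⟩
        exact le_of_lt this
      · have heq : g i W₁ = b i := le_antisymm (hWtc.1 i) (not_lt.1 hcase)
        have hzero := hno' i heq
        have : g i (W + (t + ρ/2) • d) = g i W + (t + ρ/2) * g i d := by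
          simp [map_add, map_smul, smul_eq_mul]
        rw [this, hzero, mul_zero, add_zero]
        exact hWconstr.1 i
    · simp [map_add, map_smul, smul_eq_mul, hld, hWconstr.2]
  have : t + ρ/2 ≤ t := le_csSup hIbdd hmemΔ
  linarith

lemma polytope_mem_convexHull_extremePoints {ι : Type*} [Fintype ι]
    (g : ι → E →ₗ[ℝ] ℝ) (b : ι → ℝ) (ℓ : E →ₗ[ℝ] ℝ) (c : ℝ)
    (Δ : Set E) (hΔ : Δ = {W : E | (∀ i, g i W ≤ b i) ∧ ℓ W = c})
    (hbdd : Bornology.IsBounded Δ) :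
    ∀ W ∈ Δ, W ∈ convexHull ℝ (Δ.extremePoints ℝ) := by
  classical
  suffices h : ∀ n : ℕ, ∀ W ∈ Δ, (univ.filter fun i => g i W ≠ b i).card ≤ n →
      W ∈ convexHull ℝ (Δ.extremePoints ℝ) from fun W hW => h _ W hW le_rfl
  intro n
  induction n using Nat.strong_induction_on with
  | _ n ih =>
  intro W hW hcard
  by_cases hext : W ∈ Δ.extremePoints ℝ
  · exact subset_convexHull ℝ _ hext
  rw [mem_extremePoints, not_and] at hext
  have h2 := hext hW
  push_neg at h2
  obtain ⟨x₁, hx₁, x₂, hx₂, hseg, hne⟩ := h2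
  obtain ⟨a, b', ha, hb', hab, hsum⟩ := hseg
  have hx12 : x₁ ≠ x₂ := by
    rintro rfl
    rw [← add_smul, hab, one_smul] at hsum
    exact hne hsum hsum
  set d : E := x₂ - x₁ with hd_def
  have hd : d ≠ 0 := sub_ne_zero.2 hx12.symm
  set ε : ℝ := min a b' with hε_def
  have hεa : ε ≤ a := by rw [hε_def]; exact min_le_left a b'
  have hεb : ε ≤ b' := by rw [hε_def]; exact min_le_right a b'
  have hε : 0 < ε := lt_min ha hb'
  have hconv : Convex ℝ Δ := hΔ ▸ polytope_convex g b ℓ c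
  have hp : W + ε • d ∈ Δ := by
    have hmem := hconv hx₁ hx₂ (by linarith : (0:ℝ) ≤ a - ε)
      (by linarith : (0:ℝ) ≤ b' + ε) (by ring_nf; linarith : a - ε + (b' + ε) = 1)
    have heq : (a - ε) • x₁ + (b' + ε) • x₂ = W + ε • d := by
      rw [← hsum, hd_def]; module
    rwa [heq] at hmem
  have hm : W - ε • d ∈ Δ := by
    have hmem := hconv hx₁ hx₂ (by linarith : (0:ℝ) ≤ a + ε)
      (by linarith : (0:ℝ) ≤ b' - ε) (by ring_nf; linarith : a + ε + (b' - ε) = 1)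
    have heq : (a + ε) • x₁ + (b' - ε) • x₂ = W - ε • d := by
      rw [← hsum, hd_def]; module
    rwa [heq] at hmem
  obtain ⟨t₁, ht₁ε, hW₁Δ, htight₁, i₁, hi₁t, hi₁u⟩ :=
    polytope_step g b ℓ c Δ hΔ hbdd W hW d hd ε hε hp hm
  obtain ⟨t₂, ht₂ε, hW₂Δ, htight₂, i₂, hi₂t, hi₂u⟩ :=
    polytope_step g b ℓ c Δ hΔ hbdd W hW (-d) (neg_ne_zero.2 hd) ε hε
      (by rwa [smul_neg, ← sub_eq_add_neg]) (by rwa [smul_neg, sub_neg_eq_add])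
  have hsub₁ : (univ.filter fun i => g i (W + t₁ • d) ≠ b i) ⊆
      (univ.filter fun i => g i W ≠ b i) := by
    intro i hi
    simp only [mem_filter, mem_univ, true_and] at hi ⊢
    exact fun hW' => hi (htight₁ i hW')
  have hsub₂ : (univ.filter fun i => g i (W + t₂ • (-d)) ≠ b i) ⊆
      (univ.filter fun i => g i W ≠ b i) := by
    intro i hi
    simp only [mem_filter, mem_univ, true_and] at hi ⊢
    exact fun hW' => hi (htight₂ i hW')
  have hlt₁ : (univ.filter fun i => g i (W + t₁ • d) ≠ b i).card <
      (univ.filter fun i => g i W ≠ b i).card := by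
    refine Finset.card_lt_card ((Finset.ssubset_iff_of_subset hsub₁).2 ⟨i₁, ?_, ?_⟩)
    · simpa using hi₁u
    · simpa using hi₁t
  have hlt₂ : (univ.filter fun i => g i (W + t₂ • (-d)) ≠ b i).card <
      (univ.filter fun i => g i W ≠ b i).card := by
    refine Finset.card_lt_card ((Finset.ssubset_iff_of_subset hsub₂).2 ⟨i₂, ?_, ?_⟩)
    · simpa using hi₂u
    · simpa using hi₂t
  have hm₁ := ih _ (lt_of_lt_of_le hlt₁ hcard) _ hW₁Δ le_rfl
  have hm₂ := ih _ (lt_of_lt_of_le hlt₂ hcard) _ hW₂Δ le_rfl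
  have hk : 0 < t₁ + t₂ := by linarith
  have hα : 0 ≤ t₂ / (t₁ + t₂) := div_nonneg (by linarith) (by linarith)
  have hβ : 0 ≤ t₁ / (t₁ + t₂) := div_nonneg (by linarith) (by linarith)
  have hone : t₂ / (t₁ + t₂) + t₁ / (t₁ + t₂) = 1 := by
    rw [← add_div, add_comm t₂ t₁, div_self (ne_of_gt hk)]
  have hkey : (t₂/(t₁+t₂)) • (W + t₁ • d) + (t₁/(t₁+t₂)) • (W + t₂ • (-d)) =
      ((t₂/(t₁+t₂)) + (t₁/(t₁+t₂))) • W := by module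
  have hfin := (convex_convexHull ℝ (Δ.extremePoints ℝ)) hm₁ hm₂ hα hβ hone
  rwa [hkey, hone, one_smul] at hfin

end Polytope

/-- The minimum of the conditional entropy over max-lift-feasible
decompositions is attained on extreme points of the polytope Δ_ε. -/
theorem entropy_min_attained_on_extreme_points
    {S X Y : Type*} [Fintype S] [Fintype X] [Fintype Y]
    [Nonempty S] [Nonempty X] [Nonempty Y]
    (PSX : S → X → ℝ)
    (hPSX : ∀ s x, 0 ≤ PSX s x)
    (hsum : ∑ s, ∑ x, PSX s x = 1)
    (hPS : ∀ s, 0 < ∑ x, PSX s x)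
    (hPX : ∀ x, 0 < ∑ s, PSX s x)
    (ε : ℝ) (hε : 0 ≤ ε)
    (Δ : Set (X → ℝ))
    (hΔ : Δ = {W : X → ℝ | (∀ x, 0 ≤ W x) ∧ (∑ x, W x = 1) ∧
        ∀ s, ∑ x, (PSX s x / ∑ s', PSX s' x) / (∑ x', PSX s x') * W x ≤ Real.exp ε})
    (PY : Y → ℝ) (hPY_nonneg : ∀ y, 0 ≤ PY y) (hPY_sum : ∑ y, PY y = 1)
    (W : Y → X → ℝ) (hW : ∀ y, W y ∈ Δ)
    (hdecomp : ∀ x, ∑ y, PY y * W y x = ∑ s, PSX s x) :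
    ∃ (V : Finset (X → ℝ)) (q : (X → ℝ) → ℝ),
      (↑V : Set (X → ℝ)) ⊆ Set.extremePoints ℝ Δ ∧
      (∀ v ∈ V, 0 ≤ q v) ∧
      (∑ v ∈ V, q v = 1) ∧
      (∀ x, ∑ v ∈ V, q v * v x = ∑ s, PSX s x) ∧
      (∑ v ∈ V, q v * (-∑ x, v x * Real.log (v x)) ≤
        ∑ y, PY y * (-∑ x, W y x * Real.log (W y x))) := by
  classical
  -- Express Δ as a polytope with finitely many linear constraints
  set gL : (X ⊕ S) → (X → ℝ) →ₗ[ℝ] ℝ := fun i =>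
    Sum.elim (fun x => -(LinearMap.proj x : (X → ℝ) →ₗ[ℝ] ℝ))
      (fun s => ∑ x : X, ((PSX s x / ∑ s', PSX s' x) / (∑ x', PSX s x')) •
        (LinearMap.proj x : (X → ℝ) →ₗ[ℝ] ℝ)) i with hgL
  set bb : (X ⊕ S) → ℝ := Sum.elim (fun _ => 0) (fun _ => Real.exp ε) with hbb
  set ℓ : (X → ℝ) →ₗ[ℝ] ℝ := ∑ x : X, (LinearMap.proj x : (X → ℝ) →ₗ[ℝ] ℝ) with hℓ
  have hgeval1 : ∀ (x : X) (v : X → ℝ), gL (Sum.inl x) v = -(v x) := by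
    intro x v; simp [hgL]
  have hgeval2 : ∀ (s : S) (v : X → ℝ),
      gL (Sum.inr s) v = ∑ x, (PSX s x / ∑ s', PSX s' x) / (∑ x', PSX s x') * v x := by
    intro s v; simp [hgL, LinearMap.sum_apply, smul_eq_mul]
  have hℓeval : ∀ v : X → ℝ, ℓ v = ∑ x, v x := by
    intro v; simp [hℓ, LinearMap.sum_apply]
  have hΔ' : Δ = {v : X → ℝ | (∀ i, gL i v ≤ bb i) ∧ ℓ v = 1} := by
    rw [hΔ]; ext v
    simp only [Set.mem_setOf_eq]
    constructor
    · rintro ⟨h1, h2, h3⟩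
      refine ⟨?_, by rw [hℓeval]; exact h2⟩
      rintro (x | s)
      · rw [hgeval1]; simp only [hbb, Sum.elim_inl]; linarith [h1 x]
      · rw [hgeval2]; simpa [hbb] using h3 s
    · rintro ⟨h1, h2⟩
      refine ⟨fun x => ?_, by rw [← hℓeval]; exact h2, fun s => ?_⟩
      · have := h1 (Sum.inl x); rw [hgeval1] at this; simp only [hbb, Sum.elim_inl] at this; linarith
      · have := h1 (Sum.inr s); rw [hgeval2] at this; simpa [hbb] using this
  have hΔnonneg : ∀ v ∈ Δ, ∀ x, 0 ≤ v x := by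
    intro v hv; rw [hΔ] at hv; exact hv.1
  have hΔsum : ∀ v ∈ Δ, ∑ x, v x = 1 := by
    intro v hv; rw [hΔ] at hv; exact hv.2.1
  have hΔsub : Δ ⊆ Metric.closedBall 0 1 := by
    intro v hv
    rw [Metric.mem_closedBall, dist_zero_right]
    refine (pi_norm_le_iff_of_nonneg zero_le_one).2 fun x => ?_
    rw [Real.norm_eq_abs, abs_of_nonneg (hΔnonneg v hv x)]
    calc v x ≤ ∑ x', v x' :=
          Finset.single_le_sum (fun i _ => hΔnonneg v hv i) (Finset.mem_univ x)
      _ = 1 := hΔsum v hv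
  have hbdd : Bornology.IsBounded Δ := Metric.isBounded_closedBall.subset hΔsub
  have hhull : ∀ y, W y ∈ convexHull ℝ (Δ.extremePoints ℝ) := fun y =>
    polytope_mem_convexHull_extremePoints gL bb ℓ 1 Δ hΔ' hbdd (W y) (hW y)
  have hdec : ∀ y, ∃ t : Finset (X → ℝ), ↑t ⊆ Δ.extremePoints ℝ ∧
      ∃ w : (X → ℝ) → ℝ, (∀ v ∈ t, 0 ≤ w v) ∧ (∑ v ∈ t, w v = 1) ∧
        ∑ v ∈ t, w v • v = W y := by
    intro y
    have h := hhull y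
    rw [convexHull_eq_union_convexHull_finite_subsets] at h
    simp only [Set.mem_iUnion] at h
    obtain ⟨t, hts, hmem⟩ := h
    exact ⟨t, hts, Finset.mem_convexHull'.1 hmem⟩
  choose V hVsub w hw0 hw1 hwsum using hdec
  have hVmemΔ : ∀ y, ∀ v ∈ V y, v ∈ Δ := fun y v h =>
    extremePoints_subset (hVsub y h)
  -- evaluation of decompositions
  have hWeval : ∀ y x, ∑ v ∈ V y, w y v * v x = W y x := by
    intro y x
    have := congrFun (hwsum y) x
    simpa [Finset.sum_apply, smul_eq_mul] using this
  -- key reindexing identity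
  have key : ∀ G : (X → ℝ) → ℝ,
      ∑ v ∈ Finset.univ.biUnion V,
        (∑ y, PY y * (if v ∈ V y then w y v else 0)) * G v
      = ∑ y, PY y * ∑ v ∈ V y, w y v * G v := by
    intro G
    have h1 : ∀ v, (∑ y, PY y * (if v ∈ V y then w y v else 0)) * G v
        = ∑ y, PY y * (if v ∈ V y then w y v * G v else 0) := by
      intro v; rw [Finset.sum_mul]
      refine Finset.sum_congr rfl fun y _ => ?_
      by_cases h : v ∈ V y <;> simp [h, mul_assoc]
    simp_rw [h1]
    rw [Finset.sum_comm]
    refine Finset.sum_congr rfl fun y _ => ?_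
    rw [← Finset.mul_sum]
    congr 1
    rw [Finset.sum_ite_mem,
      Finset.inter_eq_right.2 (Finset.subset_biUnion_of_mem V (Finset.mem_univ y))]
  -- Jensen per y
  have hnegid : ∀ v : X → ℝ, (-∑ x, v x * Real.log (v x)) = ∑ x, Real.negMulLog (v x) := by
    intro v
    rw [← Finset.sum_neg_distrib]
    exact Finset.sum_congr rfl fun x _ => by rw [Real.negMulLog, neg_mul]
  have hJensen : ∀ y, ∑ v ∈ V y, w y v * (-∑ x, v x * Real.log (v x)) ≤
      -∑ x, W y x * Real.log (W y x) := by
    intro y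
    rw [hnegid (W y)]
    calc ∑ v ∈ V y, w y v * (-∑ x, v x * Real.log (v x))
        = ∑ v ∈ V y, w y v * ∑ x, Real.negMulLog (v x) := by
          exact Finset.sum_congr rfl fun v _ => by rw [hnegid v]
      _ = ∑ x, ∑ v ∈ V y, w y v * Real.negMulLog (v x) := by
          rw [Finset.sum_comm]
          exact Finset.sum_congr rfl fun v _ => by rw [Finset.mul_sum]
      _ ≤ ∑ x, Real.negMulLog (W y x) := by
          refine Finset.sum_le_sum fun x _ => ?_
          have hj := Real.concaveOn_negMulLog.le_map_sum (t := V y) (w := w y)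
            (p := fun v => v x) (hw0 y) (hw1 y)
            (fun v hv => Set.mem_Ici.2 (hΔnonneg v (hVmemΔ y v hv) x))
          simpa [smul_eq_mul, hWeval y x] using hj
  refine ⟨Finset.univ.biUnion V, fun v => ∑ y, PY y * (if v ∈ V y then w y v else 0),
      ?_, ?_, ?_, ?_, ?_⟩
  · intro v hv
    obtain ⟨y, _, hy⟩ := Finset.mem_biUnion.1 hv
    exact hVsub y hy
  · intro v _
    refine Finset.sum_nonneg fun y _ => mul_nonneg (hPY_nonneg y) ?_
    by_cases h : v ∈ V y <;> simp [h, hw0 y v]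
  · have := key (fun _ => 1)
    simp only [mul_one] at this
    rw [this]
    simp_rw [hw1]
    simpa using hPY_sum
  · intro x
    have := key (fun v => v x)
    rw [this]
    simp_rw [hWeval]
    exact hdecomp x
  · have := key (fun v => -∑ x, v x * Real.log (v x))
    rw [this]
    exact Finset.sum_le_sum fun y _ =>
      mul_le_mul_of_nonneg_left (hJensen y) (hPY_nonneg y)
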